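/- For every integer n ≥ 3 and every real m with 0 < m < (n-2)^{(n-2)/2} / n^{n/2}, there exist real numbers r₋, r₊ with 0 < r₋ < ((n-2)/n)^{1/2} < r₊ < 1 such that the function V(r) = 1 - r² - 2m r^{-(n-2)} satisfies V(r₋) = V(r₊) = 0 and V(r) > 0 for all r in (r₋, r₊). -/

import Mathlib

set_option maxHeartbeats 1000000 in
/-- Existence of the horizon radii `r₋ < r_* < r₊` for the de Sitter–Schwarzschild
potential `V(r) = 1 - r² - 2m/r^(n-2)` when `0 < m < (n-2)^((n-2)/2)/n^(n/2)`. -/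
theorem stmt_0 (n : ℕ) (hn : 3 ≤ n) (m : ℝ)
    (hm0 : 0 < m)
    (hm1 : m < ((n : ℝ) - 2) ^ (((n : ℝ) - 2) / 2) / (n : ℝ) ^ ((n : ℝ) / 2)) :
    ∃ rm rp : ℝ, 0 < rm ∧ rm < Real.sqrt (((n : ℝ) - 2) / n) ∧
      Real.sqrt (((n : ℝ) - 2) / n) < rp ∧ rp < 1 ∧
      (1 - rm ^ 2 - 2 * m / rm ^ (n - 2) = 0) ∧
      (1 - rp ^ 2 - 2 * m / rp ^ (n - 2) = 0) ∧
      ∀ r ∈ Set.Ioo rm rp, 0 < 1 - r ^ 2 - 2 * m / r ^ (n - 2) := by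
  have hn3 : (3:ℝ) ≤ (n:ℝ) := by exact_mod_cast hn
  set A : ℝ := (n:ℝ) - 2 with hA
  have hA0 : 0 < A := by simp only [hA]; linarith
  have hnpos : (0:ℝ) < n := by linarith
  set q : ℝ := A / n with hq
  have hq0 : 0 < q := div_pos hA0 hnpos
  have hq1 : q < 1 := (div_lt_one hnpos).mpr (by simp only [hA]; linarith)
  set s : ℝ := Real.sqrt q with hs
  have hs0 : 0 < s := Real.sqrt_pos.mpr hq0
  have hs1 : s < 1 := by
    rw [hs, show (1:ℝ) = Real.sqrt 1 by simp]
    exact Real.sqrt_lt_sqrt hq0.le hq1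
  have hsq : s ^ 2 = q := Real.sq_sqrt hq0.le
  set W : ℝ → ℝ := fun r => r ^ (n-2) - r ^ n - 2 * m with hW
  have hWcont : Continuous W := by
    simp only [hW]; continuity
  have hpow_split : ∀ r : ℝ, r ^ n = r ^ (n-2) * r ^ 2 := by
    intro r; rw [← pow_add]; congr 1; omega
  have hcast : ((n-2:ℕ):ℝ) = A := by
    simp only [hA]; push_cast [Nat.cast_sub (show 2 ≤ n by omega)]; ring
  -- Value of W at the critical point s
  have hsnm2 : s ^ (n-2) = A ^ (A/2) / (n:ℝ) ^ (A/2) := by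
    have h1 : s ^ (n-2) = q ^ (((n-2:ℕ):ℝ)/2) := by
      rw [hs, Real.sqrt_eq_rpow, ← Real.rpow_natCast (q ^ ((1:ℝ)/2)) (n-2),
        ← Real.rpow_mul hq0.le]
      ring_nf
    rw [h1, hcast, hq, Real.div_rpow hA0.le hnpos.le]
  have hWs : W s = 2 * (A ^ (A/2) / (n:ℝ) ^ ((n:ℝ)/2) - m) := by
    have hnn : (n:ℝ) ^ ((n:ℝ)/2) = (n:ℝ) ^ (A/2) * n := by
      rw [show (n:ℝ)/2 = A/2 + 1 by simp only [hA]; ring, Real.rpow_add hnpos,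
        Real.rpow_one]
    have hnA : (0:ℝ) < (n:ℝ) ^ (A/2) := Real.rpow_pos_of_pos hnpos _
    simp only [hW]
    rw [hpow_split s, hsq, hsnm2, hnn, hq]
    field_simp
    ring
  have hWspos : 0 < W s := by rw [hWs]; linarith
  have hW0 : W 0 = -(2*m) := by
    simp only [hW]
    rw [zero_pow (by omega : n-2 ≠ 0), zero_pow (by omega : n ≠ 0)]; ring
  have hW1 : W 1 = -(2*m) := by simp [hW]
  -- roots via IVT
  obtain ⟨rm, hrm_mem, hWrm⟩ : ∃ rm ∈ Set.Ioo (0:ℝ) s, W rm = 0 := by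
    have h := intermediate_value_Ioo (le_of_lt hs0) hWcont.continuousOn
    have h0 : (0:ℝ) ∈ Set.Ioo (W 0) (W s) := by rw [hW0]; exact ⟨by linarith, hWspos⟩
    obtain ⟨x, hx, hx0⟩ := h h0
    exact ⟨x, hx, hx0⟩
  obtain ⟨rp, hrp_mem, hWrp⟩ : ∃ rp ∈ Set.Ioo s 1, W rp = 0 := by
    have h := intermediate_value_Ioo' (le_of_lt hs1) hWcont.continuousOn
    have h0 : (0:ℝ) ∈ Set.Ioo (W 1) (W s) := by rw [hW1]; exact ⟨by linarith, hWspos⟩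
    obtain ⟨x, hx, hx0⟩ := h h0
    exact ⟨x, hx, hx0⟩
  -- derivative of W
  have hderiv : ∀ r : ℝ, HasDerivAt W (((n-2:ℕ):ℝ) * r ^ (n-3) - (n:ℝ) * r ^ (n-1)) r := by
    intro r
    have h := ((hasDerivAt_pow (n-2) r).sub (hasDerivAt_pow n r)).sub_const (2*m)
    simpa [hW, show n-2-1 = n-3 from by omega] using h
  have hmono : StrictMonoOn W (Set.Icc 0 s) := by
    apply strictMonoOn_of_deriv_pos (convex_Icc 0 s) hWcont.continuousOn
    intro r hr
    rw [interior_Icc] at hr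
    obtain ⟨hr0, hrs⟩ := hr
    rw [(hderiv r).deriv]
    have h1 : r ^ (n-1) = r ^ (n-3) * r ^ 2 := by rw [← pow_add]; congr 1; omega
    have h2 : r ^ 2 < q := by rw [← hsq]; exact pow_lt_pow_left₀ hrs hr0.le two_ne_zero
    have h3 : 0 < r ^ (n-3) := pow_pos hr0 _
    have h4 : r ^ 2 * (n:ℝ) < A := by
      rw [hq] at h2; exact (lt_div_iff₀ hnpos).mp h2
    rw [hcast, h1]
    nlinarith [mul_pos h3 (show (0:ℝ) < A - (n:ℝ) * r ^ 2 by linarith)]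
  have hanti : StrictAntiOn W (Set.Icc s 1) := by
    apply strictAntiOn_of_deriv_neg (convex_Icc s 1) hWcont.continuousOn
    intro r hr
    rw [interior_Icc] at hr
    obtain ⟨hrs, hr1⟩ := hr
    have hr0 : 0 < r := lt_trans hs0 hrs
    rw [(hderiv r).deriv]
    have h1 : r ^ (n-1) = r ^ (n-3) * r ^ 2 := by rw [← pow_add]; congr 1; omega
    have h2 : q < r ^ 2 := by rw [← hsq]; exact pow_lt_pow_left₀ hrs hs0.le two_ne_zero
    have h3 : 0 < r ^ (n-3) := pow_pos hr0 _
    have h4 : A < r ^ 2 * (n:ℝ) := by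
      rw [hq] at h2; exact (div_lt_iff₀ hnpos).mp h2
    rw [hcast, h1]
    nlinarith [mul_pos h3 (show (0:ℝ) < (n:ℝ) * r ^ 2 - A by linarith)]
  -- relation between V and W
  have key : ∀ r : ℝ, 0 < r → 1 - r ^ 2 - 2 * m / r ^ (n-2) = W r / r ^ (n-2) := by
    intro r hr
    have hne : r ^ (n-2) ≠ 0 := pow_ne_zero _ hr.ne'
    simp only [hW]
    field_simp
    rw [hpow_split r]; ring
  have hrp0 : 0 < rp := lt_trans hs0 hrp_mem.1
  refine ⟨rm, rp, hrm_mem.1, hrm_mem.2, hrp_mem.1, hrp_mem.2, ?_, ?_, ?_⟩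
  · rw [key rm hrm_mem.1, hWrm, zero_div]
  · rw [key rp hrp0, hWrp, zero_div]
  · intro r hr
    have hr0 : 0 < r := lt_trans hrm_mem.1 hr.1
    have hWrpos : 0 < W r := by
      rcases le_or_gt r s with h | h
      · have := hmono ⟨hrm_mem.1.le, hrm_mem.2.le⟩ ⟨hr0.le, h⟩ hr.1
        rwa [hWrm] at this
      · have := hanti ⟨h.le, le_trans hr.2.le hrp_mem.2.le⟩
          ⟨hrp_mem.1.le, hrp_mem.2.le⟩ hr.2
        rwa [hWrp] at this
    rw [key r hr0]
    exact div_pos hWrpos (pow_pos hr0 _)
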